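/- Let F(u) = ‖o ⊙ (Ku - b)‖₀ + λ‖∇u‖_{p,1} for u ∈ [0,1]ⁿ and let G(u,v) = ⟨1, 1 - v⟩ + λ‖∇u‖_{p,1} subject to 0 ≤ u,v ≤ 1 and v ⊙ |o ⊙ (Ku - b)| = 0. If u* is a global minimizer of F over [0,1]ⁿ, then (u*, 1 - sign(|o ⊙ (Ku* - b)|)) is a global minimizer of G over its feasible set. -/

import Mathlib

open Finset

/-- The ℓ0 "norm": number of nonzero entries of `w`. -/
noncomputable def l0 {n : ℕ} (w : Fin n → ℝ) : ℕ :=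
  (Finset.univ.filter (fun i => w i ≠ 0)).card

lemma sign_abs_eq (x : ℝ) : Real.sign |x| = if x ≠ 0 then (1:ℝ) else 0 := by
  rcases eq_or_ne x 0 with h | h
  · simp [h, Real.sign_zero]
  · simp [h, Real.sign_of_pos (abs_pos.mpr h)]

lemma l0_eq_sum {n : ℕ} (w : Fin n → ℝ) :
    (l0 w : ℝ) = ∑ i, if w i ≠ 0 then (1:ℝ) else 0 := by
  rw [l0, Finset.card_filter]
  push_cast
  rfl

/-- If `u*` globally minimizes `F(u) = ‖o ⊙ (Ku - b)‖₀ + λ‖∇u‖_{p,1}` over `[0,1]ⁿ`,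
then `(u*, 1 - sign(|o ⊙ (Ku* - b)|))` globally minimizes the MPEC objective
`G(u,v) = ⟨1, 1 - v⟩ + λ‖∇u‖_{p,1}` over its feasible set. -/
theorem l0tv_mpec_forward (n : ℕ) (K Dx Dy : Matrix (Fin n) (Fin n) ℝ)
    (b o : Fin n → ℝ) (ho : ∀ i, o i = 0 ∨ o i = 1)
    (lam p : ℝ) (hlam : 0 < lam) (hp : 1 ≤ p)
    (ustar : Fin n → ℝ) (hu : ∀ i, 0 ≤ ustar i ∧ ustar i ≤ 1)
    (hmin : ∀ u : Fin n → ℝ, (∀ i, 0 ≤ u i ∧ u i ≤ 1) →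
      (l0 (fun i => o i * (K.mulVec ustar i - b i)) : ℝ) +
        lam * ∑ i, (|Dx.mulVec ustar i| ^ p + |Dy.mulVec ustar i| ^ p) ^ (1/p) ≤
      (l0 (fun i => o i * (K.mulVec u i - b i)) : ℝ) +
        lam * ∑ i, (|Dx.mulVec u i| ^ p + |Dy.mulVec u i| ^ p) ^ (1/p)) :
    let vstar : Fin n → ℝ := fun i => 1 - Real.sign |o i * (K.mulVec ustar i - b i)|
    (∀ i, 0 ≤ vstar i ∧ vstar i ≤ 1) ∧
    (∀ i, vstar i * |o i * (K.mulVec ustar i - b i)| = 0) ∧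
    (∀ u v : Fin n → ℝ, (∀ i, 0 ≤ u i ∧ u i ≤ 1) → (∀ i, 0 ≤ v i ∧ v i ≤ 1) →
      (∀ i, v i * |o i * (K.mulVec u i - b i)| = 0) →
      (∑ i, (1 - vstar i)) +
        lam * ∑ i, (|Dx.mulVec ustar i| ^ p + |Dy.mulVec ustar i| ^ p) ^ (1/p) ≤
      (∑ i, (1 - v i)) +
        lam * ∑ i, (|Dx.mulVec u i| ^ p + |Dy.mulVec u i| ^ p) ^ (1/p)) := by
  intro vstar
  have hsum_star : (∑ i, (1 - vstar i)) =
      (l0 (fun i => o i * (K.mulVec ustar i - b i)) : ℝ) := by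
    rw [l0_eq_sum]
    refine Finset.sum_congr rfl fun i _ => ?_
    simp [vstar, sign_abs_eq, -abs_mul]
  refine ⟨?_, ?_, ?_⟩
  · intro i
    simp only [vstar, sign_abs_eq]
    split_ifs <;> norm_num
  · intro i
    simp only [vstar, sign_abs_eq]
    split_ifs with h
    · ring
    · push_neg at h
      simp [h]
  · intro u v huu hvv hcomp
    have h2 : (l0 (fun i => o i * (K.mulVec u i - b i)) : ℝ) ≤ ∑ i, (1 - v i) := by
      rw [l0_eq_sum]
      refine Finset.sum_le_sum fun i _ => ?_
      rcases eq_or_ne (o i * (K.mulVec u i - b i)) 0 with h | h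
      · simp [h, (hvv i).2]
      · have habs : |o i * (K.mulVec u i - b i)| ≠ 0 := abs_ne_zero.mpr h
        have hv0 : v i = 0 := by
          have := hcomp i
          rcases mul_eq_zero.mp this with h' | h'
          · exact h'
          · exact absurd h' habs
        simp [h, hv0]
    calc (∑ i, (1 - vstar i)) +
          lam * ∑ i, (|Dx.mulVec ustar i| ^ p + |Dy.mulVec ustar i| ^ p) ^ (1/p)
        = (l0 (fun i => o i * (K.mulVec ustar i - b i)) : ℝ) +
          lam * ∑ i, (|Dx.mulVec ustar i| ^ p + |Dy.mulVec ustar i| ^ p) ^ (1/p) := by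
          rw [hsum_star]
      _ ≤ (l0 (fun i => o i * (K.mulVec u i - b i)) : ℝ) +
          lam * ∑ i, (|Dx.mulVec u i| ^ p + |Dy.mulVec u i| ^ p) ^ (1/p) := hmin u huu
      _ ≤ (∑ i, (1 - v i)) +
          lam * ∑ i, (|Dx.mulVec u i| ^ p + |Dy.mulVec u i| ^ p) ^ (1/p) := by
          linarith
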